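/- Let S̄ be a linear subspace of V, G a finite complex reflection group acting on V, and S the complement in S̄ of the reflecting hyperplanes not containing S̄. Let I_S ⊆ ℂ[V_S] be the ideal of S in the localization V_S = V ∖ ∪_{H∉𝒜_S} H, and let U be the span of the linear forms α_r for r ∈ R_S (reflections fixing S̄ pointwise). Then the canonical maps ℂ[S] ⊗ Sym^d U → gr^d_{I_S} ℂ[V_S] are vector space isomorphisms, giving an N_S-equivariant algebra isomorphism ℂ[S × S^⊥] → gr_{I_S} ℂ[V_S]. -/

import Mathlib

open MvPolynomial

noncomputable section

private lemma wsum_add {τ : Type*} (a b : τ →₀ ℕ) :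
    ((a + b).sum fun _ e => e) = (a.sum fun _ e => e) + (b.sum fun _ e => e) :=
  Finsupp.sum_add_index' (fun _ => rfl) (fun _ _ _ => rfl)

private lemma wsum_eq_zero {τ : Type*} {a : τ →₀ ℕ} (h : (a.sum fun _ e => e) = 0) : a = 0 := by
  ext x
  by_cases hx : x ∈ a.support
  · exact (Finset.sum_eq_zero_iff.mp h x hx)
  · simpa [Finsupp.notMem_support_iff] using hx

private lemma le_antisymm_wsum {τ : Type*} {a b : τ →₀ ℕ} (h : a ≤ b)
    (hs : (a.sum fun _ e => e) = (b.sum fun _ e => e)) : a = b := by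
  obtain ⟨c, rfl⟩ := le_iff_exists_add.mp h
  rw [wsum_add] at hs
  have : (c.sum fun _ e => e) = 0 := by omega
  rw [wsum_eq_zero this, add_zero]

private lemma mono_mul_X {σ τ : Type*} (m : τ →₀ ℕ) (t : τ) :
    (monomial (m.mapDomain Sum.inr) (1 : ℂ) : MvPolynomial (σ ⊕ τ) ℂ) * X (Sum.inr t)
      = monomial ((m + Finsupp.single t 1).mapDomain Sum.inr) (1 : ℂ) := by
  rw [X, monomial_mul, mul_one, Finsupp.mapDomain_add, Finsupp.mapDomain_single]

private lemma span_pow_monomials {σ τ A : Type*} [CommRing A]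
    (ψ : MvPolynomial (σ ⊕ τ) ℂ →+* A) :
    ∀ d : ℕ, (Ideal.span (Set.range fun t : τ => ψ (X (Sum.inr t)))) ^ d
      = Submodule.span A {x | ∃ m : τ →₀ ℕ, (m.sum fun _ e => e) = d ∧
          x = ψ (monomial (m.mapDomain Sum.inr) (1 : ℂ))} := by
  intro d
  induction d with
  | zero =>
    rw [pow_zero, Ideal.one_eq_top]
    symm
    rw [← Ideal.span, Ideal.eq_top_iff_one]
    refine Ideal.subset_span ⟨0, by simp, by simp⟩
  | succ d ih =>
    rw [pow_succ, ih, ← Ideal.span, Ideal.span_mul_span']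
    apply le_antisymm
    · rw [Ideal.span_le]
      rintro x ⟨a, ⟨m, hm, rfl⟩, b, ⟨t, rfl⟩, rfl⟩
      refine Submodule.subset_span ⟨m + Finsupp.single t 1, ?_, ?_⟩
      · rw [wsum_add, hm, Finsupp.sum_single_index rfl]
      · show ψ _ * ψ _ = _
        rw [← map_mul, mono_mul_X]
    · rw [Submodule.span_le]
      rintro x ⟨m, hm, rfl⟩
      have hm0 : m ≠ 0 := by
        rintro rfl; simp [Finsupp.sum_zero_index] at hm
      obtain ⟨t, ht⟩ := Finsupp.support_nonempty_iff.mpr hm0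
      have hle : Finsupp.single t 1 ≤ m := by
        rw [Finsupp.single_le_iff]
        exact Nat.one_le_iff_ne_zero.mpr (Finsupp.mem_support_iff.mp ht)
      have hadd : m - Finsupp.single t 1 + Finsupp.single t 1 = m := tsub_add_cancel_of_le hle
      have hsum : ((m - Finsupp.single t 1).sum fun _ e => e) = d := by
        have := wsum_add (m - Finsupp.single t 1) (Finsupp.single t 1)
        rw [hadd, hm, Finsupp.sum_single_index rfl] at this
        omega
      have : ψ (monomial (m.mapDomain Sum.inr) (1 : ℂ))
          = ψ (monomial ((m - Finsupp.single t 1).mapDomain Sum.inr) (1 : ℂ))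
            * ψ (X (Sum.inr t)) := by
        rw [← map_mul, mono_mul_X, hadd]
      rw [this]
      exact Ideal.subset_span (Set.mul_mem_mul ⟨_, hsum, rfl⟩ ⟨t, rfl⟩)

private def eTau (σ τ : Type*) :
    MvPolynomial (σ ⊕ τ) ℂ ≃ₐ[ℂ] MvPolynomial τ (MvPolynomial σ ℂ) :=
  (renameEquiv ℂ (Equiv.sumComm σ τ)).trans (sumAlgEquiv ℂ τ σ)

private lemma eTau_Xr {σ τ : Type*} (t : τ) : eTau σ τ (X (Sum.inr t)) = X t := by
  simp [eTau, sumAlgEquiv_X_inl]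

private lemma eTau_Xl {σ τ : Type*} (s : σ) : eTau σ τ (X (Sum.inl s)) = C (X s) := by
  simp [eTau, sumAlgEquiv_X_inr]

private lemma eTau_mono {σ τ : Type*} (m : τ →₀ ℕ) :
    eTau σ τ (monomial (m.mapDomain Sum.inr) (1 : ℂ)) = monomial m (1 : MvPolynomial σ ℂ) := by
  rw [monomial_eq, monomial_eq, map_one, map_one, one_mul, one_mul,
    Finsupp.prod_mapDomain_index_inj Sum.inr_injective, map_finsuppProd]
  exact Finsupp.prod_congr fun t _ => by rw [map_pow, eTau_Xr]

private def piHom (σ τ : Type*) : MvPolynomial (σ ⊕ τ) ℂ →+* MvPolynomial σ ℂ :=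
  (constantCoeff).comp (eTau σ τ : MvPolynomial (σ ⊕ τ) ℂ →+* MvPolynomial τ (MvPolynomial σ ℂ))

private lemma piHom_apply {σ τ : Type*} (p : MvPolynomial (σ ⊕ τ) ℂ) :
    piHom σ τ p = constantCoeff (eTau σ τ p) := rfl

private lemma piHom_eq_aeval {σ τ : Type*} (p : MvPolynomial (σ ⊕ τ) ℂ) :
    piHom σ τ p = aeval (Sum.elim X fun _ => (0 : MvPolynomial σ ℂ)) p := by
  have : piHom σ τ = (aeval (Sum.elim X fun _ => (0 : MvPolynomial σ ℂ))).toRingHom := by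
    apply ringHom_ext
    · intro r
      simp [piHom_apply, eTau, sumAlgEquiv_C_inl]
    · rintro (s | t)
      · simp [piHom_apply, eTau_Xl]
      · simp [piHom_apply, eTau_Xr]
  rw [this]; rfl

private lemma coeff_eTau_vanish {σ τ : Type*} {k : ℕ} {p : MvPolynomial (σ ⊕ τ) ℂ}
    (hp : p ∈ (Ideal.span (Set.range fun t : τ =>
        (X (Sum.inr t) : MvPolynomial (σ ⊕ τ) ℂ))) ^ k)
    {n : τ →₀ ℕ} (hn : (n.sum fun _ e => e) < k) :
    coeff n (eTau σ τ p) = 0 := by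
  classical
  have hsp := span_pow_monomials (RingHom.id (MvPolynomial (σ ⊕ τ) ℂ)) k
  simp only [RingHom.id_apply] at hsp
  rw [hsp] at hp
  induction hp using Submodule.span_induction generalizing n with
  | mem x hx =>
    obtain ⟨m, hm, rfl⟩ := hx
    rw [eTau_mono, coeff_monomial, if_neg]
    rintro rfl; omega
  | zero => simp
  | add x y _ _ hx hy => rw [map_add, coeff_add, hx hn, hy hn, add_zero]
  | smul a x _ hx =>
    rw [smul_eq_mul, map_mul, coeff_mul]
    refine Finset.sum_eq_zero fun uv huv => ?_
    rw [Finset.HasAntidiagonal.mem_antidiagonal] at huv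
    have : (uv.2.sum fun _ e => e) < k := by
      have := wsum_add uv.1 uv.2
      rw [huv] at this; omega
    rw [hx this, mul_zero]


/-- let `V = S̄ ⊕ S^⊥` with coordinates `σ` on `S̄` and `τ` on `S^⊥`, let
`B` be the (finite) set of linear forms `α_H` for the reflecting hyperplanes `H` not
containing `S̄` (degree-one polynomials with nonzero restriction to `S̄`), let
`A = ℂ[V_S] = ℂ[V][B⁻¹]` and let `I_S ⊆ A` be the ideal of `S`, generated by the
`τ`-coordinates (the span `U` of the `α_r`, `r ∈ R_S`).  Then the canonical maps
`ℂ[S] ⊗ Sym^d U → gr^d_{I_S} ℂ[V_S]` are isomorphisms; concretely, for each `d` the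
monomials of degree `d` in the `τ`-variables generate `I_S^d` as an `A`-module and are
linearly independent over `ℂ[S] = A/I_S` modulo `I_S^{d+1}`, so that
`gr_{I_S} ℂ[V_S] ≅ ℂ[S] ⊗ ℂ[S^⊥] = ℂ[S × S^⊥]` as a graded algebra. -/
theorem parabolic_degeneration_of_functions
    {σ τ : Type*} [Finite σ] [Finite τ]
    (B : Finset (MvPolynomial (σ ⊕ τ) ℂ))
    (hB : ∀ p ∈ B, MvPolynomial.IsHomogeneous p 1 ∧
      (MvPolynomial.aeval (Sum.elim MvPolynomial.X fun _ => (0 : MvPolynomial σ ℂ))) p ≠ 0) :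
    ∀ d : ℕ,
      ((Ideal.span (Set.range fun t : τ =>
          algebraMap (MvPolynomial (σ ⊕ τ) ℂ)
            (Localization (Submonoid.closure (B : Set (MvPolynomial (σ ⊕ τ) ℂ))))
            (X (Sum.inr t)))) ^ d
        = Submodule.span (Localization (Submonoid.closure (B : Set (MvPolynomial (σ ⊕ τ) ℂ))))
            {x | ∃ m : τ →₀ ℕ, (m.sum fun _ e => e) = d ∧
              x = algebraMap (MvPolynomial (σ ⊕ τ) ℂ)
                (Localization (Submonoid.closure (B : Set (MvPolynomial (σ ⊕ τ) ℂ))))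
                (monomial (m.mapDomain Sum.inr) (1 : ℂ))}) ∧
      ∀ g : (τ →₀ ℕ) →₀ Localization (Submonoid.closure (B : Set (MvPolynomial (σ ⊕ τ) ℂ))),
        (∀ m ∈ g.support, (m.sum fun _ e => e) = d) →
        (g.sum fun m x => x *
            algebraMap (MvPolynomial (σ ⊕ τ) ℂ)
              (Localization (Submonoid.closure (B : Set (MvPolynomial (σ ⊕ τ) ℂ))))
              (monomial (m.mapDomain Sum.inr) (1 : ℂ)))
          ∈ (Ideal.span (Set.range fun t : τ =>
              algebraMap (MvPolynomial (σ ⊕ τ) ℂ)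
                (Localization (Submonoid.closure (B : Set (MvPolynomial (σ ⊕ τ) ℂ))))
                (X (Sum.inr t)))) ^ (d + 1) →
        ∀ m : τ →₀ ℕ, g m ∈ (Ideal.span (Set.range fun t : τ =>
            algebraMap (MvPolynomial (σ ⊕ τ) ℂ)
              (Localization (Submonoid.closure (B : Set (MvPolynomial (σ ⊕ τ) ℂ))))
              (X (Sum.inr t)))) := by
  classical
  intro d
  constructor
  · exact span_pow_monomials (algebraMap _ _) d
  · intro g hg hsum m0
    by_cases hm0 : m0 ∈ g.support
    swap
    · rw [Finsupp.notMem_support_iff.mp hm0]; exact zero_mem _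
    have hπ : ∀ p ∈ Submonoid.closure (B : Set (MvPolynomial (σ ⊕ τ) ℂ)),
        piHom σ τ p ≠ 0 := by
      intro p hp
      induction hp using Submonoid.closure_induction with
      | mem x hx => rw [piHom_eq_aeval]; exact (hB x hx).2
      | one => rw [map_one]; exact one_ne_zero
      | mul x y hx hy ihx ihy => rw [map_mul]; exact mul_ne_zero ihx ihy
    have hM0 : Submonoid.closure (B : Set (MvPolynomial (σ ⊕ τ) ℂ))
        ≤ nonZeroDivisors (MvPolynomial (σ ⊕ τ) ℂ) := fun p hp =>
      mem_nonZeroDivisors_of_ne_zero (fun h => hπ p hp (by rw [h, map_zero]))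
    have hinj : Function.Injective (algebraMap (MvPolynomial (σ ⊕ τ) ℂ)
        (Localization (Submonoid.closure (B : Set (MvPolynomial (σ ⊕ τ) ℂ))))) :=
      IsLocalization.injective _ hM0
    obtain ⟨s, hs⟩ := IsLocalization.exist_integer_multiples
      (Submonoid.closure (B : Set (MvPolynomial (σ ⊕ τ) ℂ))) g.support g
    have hr' : ∀ m : τ →₀ ℕ, ∃ rm : MvPolynomial (σ ⊕ τ) ℂ, m ∈ g.support →
        algebraMap (MvPolynomial (σ ⊕ τ) ℂ)
          (Localization (Submonoid.closure (B : Set (MvPolynomial (σ ⊕ τ) ℂ)))) rm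
          = algebraMap (MvPolynomial (σ ⊕ τ) ℂ)
              (Localization (Submonoid.closure (B : Set (MvPolynomial (σ ⊕ τ) ℂ))))
              (s : MvPolynomial (σ ⊕ τ) ℂ) * g m := by
      intro m
      by_cases h : m ∈ g.support
      · obtain ⟨rm, hrm⟩ := hs m h
        exact ⟨rm, fun _ => hrm.trans (Algebra.smul_def _ _)⟩
      · exact ⟨0, fun h' => absurd h' h⟩
    choose r hr using hr'
    have hφq : algebraMap (MvPolynomial (σ ⊕ τ) ℂ)
          (Localization (Submonoid.closure (B : Set (MvPolynomial (σ ⊕ τ) ℂ))))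
          (∑ m ∈ g.support, r m * monomial (m.mapDomain Sum.inr) (1 : ℂ))
        = algebraMap (MvPolynomial (σ ⊕ τ) ℂ)
            (Localization (Submonoid.closure (B : Set (MvPolynomial (σ ⊕ τ) ℂ))))
            (s : MvPolynomial (σ ⊕ τ) ℂ) *
          (g.sum fun m x => x * algebraMap (MvPolynomial (σ ⊕ τ) ℂ)
            (Localization (Submonoid.closure (B : Set (MvPolynomial (σ ⊕ τ) ℂ))))
            (monomial (m.mapDomain Sum.inr) (1 : ℂ))) := by
      rw [map_sum, Finsupp.sum, Finset.mul_sum]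
      refine Finset.sum_congr rfl fun m hm => ?_
      rw [map_mul, hr m hm, mul_assoc]
    have hqI : algebraMap (MvPolynomial (σ ⊕ τ) ℂ)
          (Localization (Submonoid.closure (B : Set (MvPolynomial (σ ⊕ τ) ℂ))))
          (∑ m ∈ g.support, r m * monomial (m.mapDomain Sum.inr) (1 : ℂ))
        ∈ (Ideal.span (Set.range fun t : τ =>
            algebraMap (MvPolynomial (σ ⊕ τ) ℂ)
              (Localization (Submonoid.closure (B : Set (MvPolynomial (σ ⊕ τ) ℂ))))
              (X (Sum.inr t)))) ^ (d + 1) := by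
      rw [hφq]; exact Ideal.mul_mem_left _ _ hsum
    have hIJ : Ideal.span (Set.range fun t : τ =>
          algebraMap (MvPolynomial (σ ⊕ τ) ℂ)
            (Localization (Submonoid.closure (B : Set (MvPolynomial (σ ⊕ τ) ℂ))))
            (X (Sum.inr t)))
        = Ideal.map (algebraMap (MvPolynomial (σ ⊕ τ) ℂ)
            (Localization (Submonoid.closure (B : Set (MvPolynomial (σ ⊕ τ) ℂ)))))
            (Ideal.span (Set.range fun t : τ =>
              (X (Sum.inr t) : MvPolynomial (σ ⊕ τ) ℂ))) := by
      rw [Ideal.map_span, ← Set.range_comp]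
      rfl
    rw [hIJ, ← Ideal.map_pow, IsLocalization.mem_map_algebraMap_iff
      (Submonoid.closure (B : Set (MvPolynomial (σ ⊕ τ) ℂ)))] at hqI
    obtain ⟨⟨⟨j, hj⟩, u⟩, huj⟩ := hqI
    have hqu : (∑ m ∈ g.support, r m * monomial (m.mapDomain Sum.inr) (1 : ℂ))
          * (u : MvPolynomial (σ ⊕ τ) ℂ)
        ∈ (Ideal.span (Set.range fun t : τ =>
            (X (Sum.inr t) : MvPolynomial (σ ⊕ τ) ℂ))) ^ (d + 1) := by
      have : (∑ m ∈ g.support, r m * monomial (m.mapDomain Sum.inr) (1 : ℂ))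
          * (u : MvPolynomial (σ ⊕ τ) ℂ) = j := hinj (by rw [map_mul]; exact huj)
      rw [this]; exact hj
    have hd0 : (m0.sum fun _ e => e) = d := hg m0 hm0
    have hkey : coeff m0 (eTau σ τ
        ((∑ m ∈ g.support, r m * monomial (m.mapDomain Sum.inr) (1 : ℂ))
          * (u : MvPolynomial (σ ⊕ τ) ℂ))) = 0 :=
      coeff_eTau_vanish hqu (by omega)
    have hqu_expand : eTau σ τ
          ((∑ m ∈ g.support, r m * monomial (m.mapDomain Sum.inr) (1 : ℂ))
            * (u : MvPolynomial (σ ⊕ τ) ℂ))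
        = ∑ m ∈ g.support, eTau σ τ (r m * (u : MvPolynomial (σ ⊕ τ) ℂ))
            * monomial m (1 : MvPolynomial σ ℂ) := by
      rw [Finset.sum_mul, map_sum]
      refine Finset.sum_congr rfl fun m hm => ?_
      rw [mul_right_comm, map_mul, eTau_mono]
    rw [hqu_expand] at hkey
    have hterm : ∀ m ∈ g.support,
        coeff m0 (eTau σ τ (r m * (u : MvPolynomial (σ ⊕ τ) ℂ))
            * monomial m (1 : MvPolynomial σ ℂ))
          = if m = m0 then
              constantCoeff (eTau σ τ (r m * (u : MvPolynomial (σ ⊕ τ) ℂ))) else 0 := by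
      intro m hm
      rw [coeff_mul_monomial']
      by_cases h : m = m0
      · subst h
        rw [if_pos le_rfl, if_pos rfl, tsub_self, mul_one]
        rfl
      · rw [if_neg h, if_neg]
        intro hle
        exact h (le_antisymm_wsum hle (by rw [hg m hm, hd0]))
    rw [coeff_sum] at hkey
    rw [Finset.sum_congr rfl hterm, Finset.sum_ite_eq' g.support m0] at hkey
    rw [if_pos hm0] at hkey
    have hpi0 : piHom σ τ (r m0) = 0 := by
      have h5 : piHom σ τ (r m0) * piHom σ τ (u : MvPolynomial (σ ⊕ τ) ℂ) = 0 := by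
        rw [← map_mul]; exact hkey
      rcases mul_eq_zero.mp h5 with h | h
      · exact h
      · exact absurd h (hπ (u : MvPolynomial (σ ⊕ τ) ℂ) u.2)
    have hrJ : r m0 ∈ Ideal.span (Set.range fun t : τ =>
        (X (Sum.inr t) : MvPolynomial (σ ⊕ τ) ℂ)) := by
      have h1 : eTau σ τ (r m0) ∈ Ideal.span
          (X '' (Set.univ : Set τ) : Set (MvPolynomial τ (MvPolynomial σ ℂ))) := by
        rw [mem_ideal_span_X_image]
        intro n hn
        rcases eq_or_ne n 0 with rfl | hne
        · exact absurd (show coeff 0 (eTau σ τ (r m0)) = 0 from hpi0)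
            (mem_support_iff.mp hn)
        · obtain ⟨i, hi⟩ := Finsupp.ne_iff.mp hne
          exact ⟨i, trivial, by simpa using hi⟩
      have h2 := Ideal.mem_map_of_mem
        ((eTau σ τ).symm : MvPolynomial τ (MvPolynomial σ ℂ) →+* MvPolynomial (σ ⊕ τ) ℂ) h1
      rw [Ideal.map_span, Set.image_image] at h2
      have h3 : ((eTau σ τ).symm : MvPolynomial τ (MvPolynomial σ ℂ)
            →+* MvPolynomial (σ ⊕ τ) ℂ) (eTau σ τ (r m0)) = r m0 :=
        (eTau σ τ).symm_apply_apply _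
      have h4 : (fun x : τ => ((eTau σ τ).symm : MvPolynomial τ (MvPolynomial σ ℂ)
            →+* MvPolynomial (σ ⊕ τ) ℂ) (X x))
          = fun t : τ => (X (Sum.inr t) : MvPolynomial (σ ⊕ τ) ℂ) := by
        funext t
        show (eTau σ τ).symm (X t) = X (Sum.inr t)
        rw [← eTau_Xr (σ := σ) t, AlgEquiv.symm_apply_apply]
      rw [h3, h4, Set.image_univ] at h2
      exact h2
    have hfin : algebraMap (MvPolynomial (σ ⊕ τ) ℂ)
          (Localization (Submonoid.closure (B : Set (MvPolynomial (σ ⊕ τ) ℂ)))) (r m0)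
        ∈ Ideal.span (Set.range fun t : τ =>
            algebraMap (MvPolynomial (σ ⊕ τ) ℂ)
              (Localization (Submonoid.closure (B : Set (MvPolynomial (σ ⊕ τ) ℂ))))
              (X (Sum.inr t))) := by
      rw [hIJ]; exact Ideal.mem_map_of_mem _ hrJ
    obtain ⟨v, hv⟩ : IsUnit (algebraMap (MvPolynomial (σ ⊕ τ) ℂ)
        (Localization (Submonoid.closure (B : Set (MvPolynomial (σ ⊕ τ) ℂ))))
        (s : MvPolynomial (σ ⊕ τ) ℂ)) := IsLocalization.map_units _ s
    have hgm0 : g m0 = ↑v⁻¹ * algebraMap (MvPolynomial (σ ⊕ τ) ℂ)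
        (Localization (Submonoid.closure (B : Set (MvPolynomial (σ ⊕ τ) ℂ)))) (r m0) := by
      rw [hr m0 hm0, ← hv, ← mul_assoc, Units.inv_mul, one_mul]
    rw [hgm0]
    exact Ideal.mul_mem_left _ _ hfin
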